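/- Global convergence equivalence: the synchronous update sends every state to the all-Glory state in one step if and only if the hub domination condition holds everywhere; formally, (∀ state s, ∀ vertex v, next_heaven(s, v) = Glory) ⟺ (∀ v ≠ g, hub_weight(v) ≥ rest_weight(v)). -/

import Mathlib

open Finset

inductive Vote where
  | Glory
  | Gnash
deriving DecidableEq

variable {V : Type*} [Fintype V] [DecidableEq V]

/-- Influence of the hub `g` on `v`. -/
def hubWeight (w : V → V → NNReal) (g v : V) : NNReal := w g v

/-- Total influence of all non-hub vertices on `v`. -/
def restWeight (w : V → V → NNReal) (g v : V) : NNReal :=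
  ∑ u ∈ Finset.univ.filter (fun u => u ≠ g), w u v

/-- The hub-forced state: agrees with `s` off the hub and is `Glory` at the hub. -/
def forceG (g : V) (s : V → Vote) : V → Vote :=
  fun u => if u = g then Vote.Glory else s u

/-- Weighted score of opinion `X` at vertex `v` in state `s`. -/
def score (w : V → V → NNReal) (X : Vote) (s : V → Vote) (v : V) : NNReal :=
  ∑ u, w u v * (if s u = X then 1 else 0)

/-- Synchronous update rule. -/
noncomputable def nextHeaven (w : V → V → NNReal) (g : V) (s : V → Vote) (v : V) : Vote :=
  if v = g then Vote.Glory
  else if score w Vote.Glory (forceG g s) v < score w Vote.Gnash (forceG g s) v then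
    Vote.Gnash
  else Vote.Glory

/-- τ-biased synchronous update rule. -/
noncomputable def nextHeavenTau (w : V → V → NNReal) (g : V) (τ : V → NNReal) (s : V → Vote) (v : V) : Vote :=
  if v = g then Vote.Glory
  else if score w Vote.Glory (forceG g s) v + τ v < score w Vote.Gnash (forceG g s) v then
    Vote.Gnash
  else Vote.Glory

/-- The state assigning `Gnash` to every vertex. -/
def allGnash : V → Vote := fun _ => Vote.Gnash

/-- The state assigning `Glory` to every vertex. -/
def allGlory : V → Vote := fun _ => Vote.Glory

/-- Asynchronous update at a single vertex. -/
noncomputable def asyncStep (w : V → V → NNReal) (g : V) (s : V → Vote) (u : V) : V → Vote :=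
  Function.update s u (nextHeaven w g s u)

lemma scoreGlory_ge (w : V → V → NNReal) (g v : V) (s : V → Vote) :
    w g v ≤ score w Vote.Glory (forceG g s) v := by
  have : w g v * (if forceG g s g = Vote.Glory then (1:NNReal) else 0) = w g v := by
    simp [forceG]
  rw [score, ← this]
  exact Finset.single_le_sum (f := fun u => w u v * (if forceG g s u = Vote.Glory then 1 else 0))
    (fun u _ => zero_le) (Finset.mem_univ g)

lemma scoreGnash_le (w : V → V → NNReal) (g v : V) (s : V → Vote) :
    score w Vote.Gnash (forceG g s) v ≤ restWeight w g v := by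
  rw [score, restWeight, Finset.sum_filter]
  apply Finset.sum_le_sum
  intro u _
  by_cases hu : u = g
  · simp [hu, forceG]
  · have h1 : (if s u = Vote.Gnash then (1:NNReal) else 0) ≤ 1 := by split <;> simp
    simpa [hu, forceG] using mul_le_of_le_one_right (show (0:NNReal) ≤ w u v from zero_le) h1

lemma scoreGlory_allGnash (w : V → V → NNReal) (g v : V) :
    score w Vote.Glory (forceG g allGnash) v = w g v := by
  rw [score]
  rw [Finset.sum_eq_single g]
  · simp [forceG]
  · intro u _ hu; simp [forceG, hu, allGnash]
  · simp

lemma scoreGnash_allGnash (w : V → V → NNReal) (g v : V) :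
    score w Vote.Gnash (forceG g allGnash) v = restWeight w g v := by
  rw [score, restWeight, Finset.sum_filter]
  apply Finset.sum_congr rfl
  intro u _
  by_cases hu : u = g <;> simp [forceG, hu, allGnash]

theorem global_conv_equiv (w : V → V → NNReal) (g : V) :
    (∀ (s : V → Vote) (v : V), nextHeaven w g s v = Vote.Glory) ↔
      (∀ v ≠ g, hubWeight w g v ≥ restWeight w g v) := by
  constructor
  · intro h v hv
    have hh := h allGnash v
    rw [nextHeaven, if_neg hv] at hh
    rw [scoreGlory_allGnash, scoreGnash_allGnash] at hh
    by_contra hc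
    simp only [hubWeight] at hc
    rw [if_pos (not_le.mp hc)] at hh
    exact Vote.noConfusion hh
  · intro h s v
    rw [nextHeaven]
    by_cases hv : v = g
    · simp [hv]
    · rw [if_neg hv, if_neg]
      exact not_lt.mpr <| (scoreGnash_le w g v s).trans <|
        (h v hv).trans (scoreGlory_ge w g v s)
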